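/- arXiv:0810.0633 — 10 statements merged into one kernel-verified Lean document; each statement's English description precedes it below -/
import Mathlib

section
/- Let R be a left-total binary relation on U. If C is a connected component of R (an equivalence class of the smallest equivalence containing R), then C^▼ = C^▲ = C, so the rough set of C is exact. -/
variable {U : Type*}

/-- Lower approximation. -/
def low (R : U → U → Prop) (X : Set U) : Set U := {x | ∀ y, R x y → y ∈ X}

/-- Upper approximation. -/
def upp (R : U → U → Prop) (X : Set U) : Set U := {x | ∃ y, R x y ∧ y ∈ X}

theorem component_exact (R : U → U → Prop) (hlt : ∀ x, ∃ y, R x y)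
    (C : Set U) (hC : ∃ a, C = {y | Relation.EqvGen R a y}) :
    low R C = C ∧ upp R C = C := by
  obtain ⟨a, rfl⟩ := hC
  constructor <;> ext x <;> simp only [low, upp, Set.mem_setOf_eq] <;> constructor
  · intro h
    obtain ⟨y, hy⟩ := hlt x
    exact Relation.EqvGen.trans _ _ _ (h y hy) (Relation.EqvGen.symm _ _ (Relation.EqvGen.rel _ _ hy))
  · intro h y hxy
    exact Relation.EqvGen.trans _ _ _ h (Relation.EqvGen.rel _ _ hxy)
  · rintro ⟨y, hxy, hy⟩
    exact Relation.EqvGen.trans _ _ _ hy (Relation.EqvGen.symm _ _ (Relation.EqvGen.rel _ _ hxy))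
  · intro h
    obtain ⟨y, hy⟩ := hlt x
    exact ⟨y, hy, Relation.EqvGen.trans _ _ _ h (Relation.EqvGen.rel _ _ hy)⟩
end

section
/- Let R be a left-total binary relation on U, C a connected component of R, and X ⊆ U. Then (X ∩ C)^▼ = X^▼ ∩ C and (X ∩ C)^▲ = X^▲ ∩ C. -/
variable {U : Type*}

theorem approx_inter_component (R : U → U → Prop) (hlt : ∀ x, ∃ y, R x y)
    (C : Set U) (hC : ∃ a, C = {y | Relation.EqvGen R a y}) (X : Set U) :
    low R (X ∩ C) = low R X ∩ C ∧ upp R (X ∩ C) = upp R X ∩ C := by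
  obtain ⟨a, rfl⟩ := hC
  have key : ∀ x y, R x y → (Relation.EqvGen R a x ↔ Relation.EqvGen R a y) := by
    intro x y h
    constructor
    · intro hx; exact hx.trans _ _ _ (Relation.EqvGen.rel _ _ h)
    · intro hy; exact hy.trans _ _ _ ((Relation.EqvGen.rel _ _ h).symm _ _)
  constructor
  · ext x
    constructor
    · intro hx
      obtain ⟨y, hy⟩ := hlt x
      exact ⟨fun z hz => (hx z hz).1, (key x y hy).mpr (hx y hy).2⟩
    · rintro ⟨h1, h2⟩ y hy
      exact ⟨h1 y hy, (key x y hy).mp h2⟩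
  · ext x
    constructor
    · rintro ⟨y, hy, hX, hc⟩
      exact ⟨⟨y, hy, hX⟩, (key x y hy).mpr hc⟩
    · rintro ⟨⟨y, hy, hX⟩, hc⟩
      exact ⟨y, hy, hX, (key x y hy).mp hc⟩
end

section
/- Let R be a left-total binary relation on U and H a set of connected components of R. Then (⋃H)^▼ = ⋃H = (⋃H)^▲; in particular, the rough set of any union of connected components is exact. -/
variable {U : Type*}

theorem union_components_exact (R : U → U → Prop) (hlt : ∀ x, ∃ y, R x y)
    (H : Set (Set U)) (hH : ∀ C ∈ H, ∃ a, C = {y | Relation.EqvGen R a y}) :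
    low R (⋃₀ H) = ⋃₀ H ∧ upp R (⋃₀ H) = ⋃₀ H := by
  have closed : ∀ C ∈ H, ∀ x ∈ C, ∀ y, R x y → y ∈ C := by
    intro C hC x hx y hxy
    obtain ⟨a, rfl⟩ := hH C hC
    exact Relation.EqvGen.trans _ _ _ hx (Relation.EqvGen.rel _ _ hxy)
  have back : ∀ C ∈ H, ∀ x y, R x y → y ∈ C → x ∈ C := by
    intro C hC x y hxy hy
    obtain ⟨a, rfl⟩ := hH C hC
    exact Relation.EqvGen.trans _ _ _ hy
      (Relation.EqvGen.symm _ _ (Relation.EqvGen.rel _ _ hxy))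
  constructor
  · ext x
    constructor
    · intro hx
      obtain ⟨y, hy⟩ := hlt x
      obtain ⟨C, hC, hyC⟩ := hx y hy
      exact ⟨C, hC, back C hC x y hy hyC⟩
    · rintro ⟨C, hC, hxC⟩ y hxy
      exact ⟨C, hC, closed C hC x hxC y hxy⟩
  · ext x
    constructor
    · rintro ⟨y, hxy, C, hC, hyC⟩
      exact ⟨C, hC, back C hC x y hxy hyC⟩
    · rintro ⟨C, hC, hxC⟩
      obtain ⟨y, hy⟩ := hlt x
      exact ⟨y, hy, C, hC, closed C hC x hxC y hy⟩
end

section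
/- Let R be a quasiorder on a nonempty set U. For any family {X_i : i ∈ I} of subsets of U, there exists a set W ⊆ U such that W^▼ = ⋂_{i∈I} X_i^▼ and W^▲ = ⋂_{i∈I} X_i^▲. That is, the set RS = {(X^▼, X^▲) : X ⊆ U}, ordered coordinatewise, is closed under arbitrary intersections taken in ℘(U) × ℘(U). -/
variable {U : Type*}

theorem rough_sets_closed_under_inter (R : U → U → Prop) [Nonempty U]
    (hrefl : Reflexive R) (htrans : Transitive R)
    (I : Type*) (X : I → Set U) :
    ∃ W : Set U, low R W = ⋂ i, low R (X i) ∧ upp R W = ⋂ i, upp R (X i) := by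
  classical
  set L : U → Prop := fun x => ∀ i, ∀ y, R x y → y ∈ X i with hLdef
  set H : U → Prop := fun x => ∀ i, ∃ y, R x y ∧ y ∈ X i with hHdef
  set E : U → Prop := fun x => H x ∧ ∀ y, R x y → ¬ L y with hEdef
  set B : U → Prop := fun x => E x ∧ ∀ y, R x y → H y with hBdef
  set B₁ : U → Prop := fun x => B x ∧ ∀ y, R x y → R y x with hB1def
  set B₃ : U → Prop := fun x => B x ∧ ∀ y, R x y → ¬ B₁ y with hB3def
  have hLH : ∀ x, L x → H x := fun x hx i => ⟨x, hrefl x, hx i x (hrefl x)⟩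
  have hEH : ∀ x, E x → H x := fun x hx => hx.1
  have hEnoL : ∀ x, E x → ∀ y, R x y → ¬ L y := fun x hx => hx.2
  have hEup : ∀ x, E x → ∀ y, R x y → H y → E y := by
    intro x hx y hxy hy
    exact ⟨hy, fun z hyz => hx.2 z (htrans hxy hyz)⟩
  have hBup : ∀ x, B x → ∀ y, R x y → B y := by
    intro x hx y hxy
    exact ⟨hEup x hx.1 y hxy (hx.2 y hxy), fun z hyz => hx.2 z (htrans hxy hyz)⟩
  have hB1up : ∀ x, B₁ x → ∀ y, R x y → B₁ y := by
    intro x hx y hxy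
    refine ⟨hBup x hx.1 y hxy, fun z hyz => ?_⟩
    exact htrans (hx.2 z (htrans hxy hyz)) hxy
  have hB3up : ∀ x, B₃ x → ∀ y, R x y → B₃ y := by
    intro x hx y hxy
    exact ⟨hBup x hx.1 y hxy, fun z hyz => hx.2 z (htrans hxy hyz)⟩
  -- split property on E
  have hsplit : ∀ x, E x → ∃ i u v, R x u ∧ u ∈ X i ∧ R x v ∧ v ∉ X i := by
    intro x hx
    have hxnL : ¬ L x := hx.2 x (hrefl x)
    simp only [hLdef] at hxnL
    push_neg at hxnL
    obtain ⟨i, v, hxv, hvX⟩ := hxnL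
    obtain ⟨u, hxu, huX⟩ := hx.1 i
    exact ⟨i, u, v, hxu, huX, hxv, hvX⟩
  -- setoid for equivalence classes
  let s₁ : Setoid U :=
    { r := fun a b => a = b ∨ (R a b ∧ R b a)
      iseqv := by
        refine ⟨fun a => Or.inl rfl, ?_, ?_⟩
        · rintro a b (rfl | ⟨h1, h2⟩)
          · exact Or.inl rfl
          · exact Or.inr ⟨h2, h1⟩
        · rintro a b c (rfl | ⟨h1, h2⟩) (rfl | ⟨h3, h4⟩)
          · exact Or.inl rfl
          · exact Or.inr ⟨h3, h4⟩
          · exact Or.inr ⟨h1, h2⟩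
          · exact Or.inr ⟨htrans h1 h3, htrans h4 h2⟩ }
  let rep : U → U := fun x => (Quotient.mk s₁ x).out
  have hrep_rel : ∀ x, rep x = x ∨ (R (rep x) x ∧ R x (rep x)) := fun x =>
    Quotient.mk_out (s := s₁) x
  have hrep_congr : ∀ x y, (x = y ∨ (R x y ∧ R y x)) → rep x = rep y := by
    intro x y h
    show (Quotient.mk s₁ x).out = (Quotient.mk s₁ y).out
    rw [Quotient.sound (s := s₁) h]
  have hrep_idem : ∀ x, rep (rep x) = rep x := by
    intro x
    show ((Quotient.mk s₁ (Quotient.mk s₁ x).out)).out = _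
    rw [Quotient.out_eq]
  have hrepR : ∀ x, R x (rep x) ∧ R (rep x) x := by
    intro x
    rcases hrep_rel x with h | ⟨h1, h2⟩
    · rw [h]; exact ⟨hrefl x, hrefl x⟩
    · exact ⟨h2, h1⟩
  -- strict successor function on B₃
  have hsuccex : ∀ x : U, ∃ y, B₃ x → R x y ∧ ¬ R y x ∧ B₃ y := by
    intro x
    by_cases hx : B₃ x
    · have hxnB1 : ¬ B₁ x := hx.2 x (hrefl x)
      simp only [hB1def] at hxnB1
      push_neg at hxnB1
      obtain ⟨y, hxy, hyx⟩ := hxnB1 hx.1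
      exact ⟨y, fun _ => ⟨hxy, hyx, hB3up x hx y hxy⟩⟩
    · exact ⟨x, fun h => absurd h hx⟩
  choose f hf using hsuccex
  have hfB3 : ∀ x, B₃ x → B₃ (f x) := fun x hx => (hf x hx).2.2
  have hfR : ∀ x, B₃ x → R x (f x) := fun x hx => (hf x hx).1
  have hfnR : ∀ x, B₃ x → ¬ R (f x) x := fun x hx => (hf x hx).2.1
  have hitB3 : ∀ (k : ℕ) (x), B₃ x → B₃ (f^[k] x) := by
    intro k
    induction k with
    | zero => exact fun x hx => hx
    | succ n ih =>
      intro x hx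
      rw [Function.iterate_succ_apply']
      exact hfB3 _ (ih x hx)
  have hchain : ∀ (k : ℕ) (x), B₃ x → R x (f^[k+1] x) ∧ ¬ R (f^[k+1] x) x := by
    intro k
    induction k with
    | zero =>
      intro x hx
      simpa using ⟨hfR x hx, hfnR x hx⟩
    | succ n ih =>
      intro x hx
      obtain ⟨h1, h2⟩ := ih x hx
      have hB : B₃ (f^[n+1] x) := hitB3 (n+1) x hx
      rw [Function.iterate_succ_apply']
      exact ⟨htrans h1 (hfR _ hB), fun hcon => hfnR _ hB (htrans hcon h1)⟩
  have hcancel : ∀ x, B₃ x → ∀ a b : ℕ, f^[a] x = f^[b] x → a = b := by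
    intro x hx a b hab
    by_contra hne
    wlog hlt : a < b generalizing a b
    · exact this b a hab.symm (Ne.symm hne) (by omega)
    have h1 : f^[(b - a - 1) + 1] (f^[a] x) = f^[a] x := by
      rw [← Function.iterate_add_apply]
      rw [show (b - a - 1) + 1 + a = b from by omega]
      exact hab.symm
    have hB : B₃ (f^[a] x) := hitB3 a x hx
    have hc := hchain (b - a - 1) (f^[a] x) hB
    rw [h1] at hc
    exact hc.2 (hrefl _)
  -- setoid of f-orbit connectedness
  let s₂ : Setoid U :=
    { r := fun a b => ∃ p : ℕ × ℕ, f^[p.1] a = f^[p.2] b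
      iseqv := by
        refine ⟨fun a => ⟨(0, 0), rfl⟩, ?_, ?_⟩
        · rintro a b ⟨⟨m, n⟩, h⟩
          exact ⟨(n, m), h.symm⟩
        · rintro a b c ⟨⟨m, n⟩, h1⟩ ⟨⟨p, q⟩, h2⟩
          refine ⟨(p + m, n + q), ?_⟩
          rw [Function.iterate_add_apply, h1, ← Function.iterate_add_apply,
            Nat.add_comm p n, Function.iterate_add_apply, h2,
            ← Function.iterate_add_apply] }
  let rep₂ : U → U := fun x => (Quotient.mk s₂ x).out
  have hrel2 : ∀ x : U, ∃ p : ℕ × ℕ, f^[p.1] x = f^[p.2] (rep₂ x) := by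
    intro x
    obtain ⟨⟨m, n⟩, h⟩ := Quotient.mk_out (s := s₂) x
    exact ⟨(n, m), h.symm⟩
  choose pr hpr using hrel2
  let χ : U → ZMod 2 := fun x => ((pr x).1 : ZMod 2) - ((pr x).2 : ZMod 2)
  have hrep2f : ∀ x, rep₂ (f x) = rep₂ x := by
    intro x
    show (Quotient.mk s₂ (f x)).out = (Quotient.mk s₂ x).out
    have : s₂ (f x) x := ⟨(0, 1), by simp⟩
    rw [Quotient.sound (s := s₂) this]
  have hχf : ∀ x, B₃ x → χ (f x) = χ x + 1 := by
    intro x hx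
    have h1 : f^[(pr x).1] x = f^[(pr x).2] (rep₂ x) := hpr x
    have h2 : f^[(pr (f x)).1] (f x) = f^[(pr (f x)).2] (rep₂ x) := by
      rw [← hrep2f x]; exact hpr (f x)
    have h2' : f^[(pr (f x)).1 + 1] x = f^[(pr (f x)).2] (rep₂ x) := by
      rw [Function.iterate_add_apply, Function.iterate_one]; exact h2
    have hnat : (pr (f x)).2 + (pr x).1 = (pr x).2 + ((pr (f x)).1 + 1) := by
      apply hcancel x hx
      calc f^[(pr (f x)).2 + (pr x).1] x
          = f^[(pr (f x)).2] (f^[(pr x).1] x) := Function.iterate_add_apply f _ _ x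
        _ = f^[(pr (f x)).2] (f^[(pr x).2] (rep₂ x)) := by rw [h1]
        _ = f^[(pr (f x)).2 + (pr x).2] (rep₂ x) := (Function.iterate_add_apply f _ _ _).symm
        _ = f^[(pr x).2 + (pr (f x)).2] (rep₂ x) := by rw [Nat.add_comm]
        _ = f^[(pr x).2] (f^[(pr (f x)).2] (rep₂ x)) := Function.iterate_add_apply f _ _ _
        _ = f^[(pr x).2] (f^[(pr (f x)).1 + 1] x) := by rw [h2']
        _ = f^[(pr x).2 + ((pr (f x)).1 + 1)] x := (Function.iterate_add_apply f _ _ x).symm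
    have hc : ((pr (f x)).2 : ZMod 2) + (pr x).1 = (pr x).2 + ((pr (f x)).1 + 1) := by
      exact_mod_cast congrArg (fun k : ℕ => (k : ZMod 2)) hnat
    have key : ∀ a b c d : ZMod 2, c + a = d + (b + 1) → b - c = a - d + 1 := by decide
    exact key ((pr x).1) ((pr (f x)).1) ((pr (f x)).2) ((pr x).2) hc
  -- the added set D
  set D : U → Prop := fun x =>
    (E x ∧ ¬ B x) ∨ (B₁ x ∧ rep x = x) ∨ (B₃ x ∧ χ x = 0) with hDdef
  have hDH : ∀ x, D x → H x := by
    rintro x (⟨hx, -⟩ | ⟨hx, -⟩ | ⟨hx, -⟩)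
    · exact hx.1
    · exact hx.1.1.1
    · exact hx.1.1.1
  have hDE : ∀ x, D x → E x := by
    rintro x (⟨hx, -⟩ | ⟨hx, -⟩ | ⟨hx, -⟩)
    · exact hx
    · exact hx.1.1
    · exact hx.1.1
  -- every member of D has a successor outside L ∪ D
  have hDwit : ∀ y, D y → ∃ z, R y z ∧ ¬ L z ∧ ¬ D z := by
    rintro y (⟨hyE, hynB⟩ | ⟨hyB1, hyrep⟩ | ⟨hyB3, hyχ⟩)
    · simp only [hBdef] at hynB
      push_neg at hynB
      obtain ⟨z, hyz, hznH⟩ := hynB hyE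
      exact ⟨z, hyz, fun hL => hznH (hLH z hL), fun hD => hznH (hDH z hD)⟩
    · obtain ⟨i, u, v, hyu, huX, hyv, hvX⟩ := hsplit y hyB1.1.1
      have hz : ∃ z, R y z ∧ z ≠ y := by
        by_cases hu : u = y
        · exact ⟨v, hyv, fun hv => hvX (hv ▸ hu ▸ huX)⟩
        · exact ⟨u, hyu, hu⟩
      obtain ⟨z, hyz, hzy⟩ := hz
      have hzB1 : B₁ z := hB1up y hyB1 z hyz
      have hzrep : rep z = y := by
        rw [hrep_congr z y (Or.inr ⟨hyB1.2 z hyz, hyz⟩)]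
        exact hyrep
      refine ⟨z, hyz, hEnoL y hyB1.1.1 z hyz, ?_⟩
      rintro (⟨-, hznB⟩ | ⟨-, hzr⟩ | ⟨hzB3, -⟩)
      · exact hznB hzB1.1
      · exact hzy (hzr.symm.trans hzrep)
      · exact hzB3.2 z (hrefl z) hzB1
    · refine ⟨f y, hfR y hyB3, hEnoL y hyB3.1.1 (f y) (hfR y hyB3), ?_⟩
      have hfy : B₃ (f y) := hfB3 y hyB3
      rintro (⟨-, hznB⟩ | ⟨hzB1, -⟩ | ⟨-, hzχ⟩)
      · exact hznB hfy.1
      · exact hfy.2 (f y) (hrefl _) hzB1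
      · rw [hχf y hyB3, hyχ] at hzχ
        exact absurd hzχ (by decide)
  -- every member of E has a successor in D
  have hcov : ∀ x, E x → ∃ z, R x z ∧ D z := by
    intro x hx
    by_cases hB : B x
    · by_cases hmeet : ∃ w, R x w ∧ B₁ w
      · obtain ⟨w, hxw, hwB1⟩ := hmeet
        refine ⟨rep w, htrans hxw (hrepR w).1, Or.inr (Or.inl ⟨?_, hrep_idem w⟩)⟩
        exact hB1up w hwB1 (rep w) (hrepR w).1
      · have hx3 : B₃ x := ⟨hB, fun y hxy hyB1 => hmeet ⟨y, hxy, hyB1⟩⟩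
        by_cases hχ0 : χ x = 0
        · exact ⟨x, hrefl x, Or.inr (Or.inr ⟨hx3, hχ0⟩)⟩
        · have h1 : χ (f x) = 0 := by
            rw [hχf x hx3]
            revert hχ0
            generalize χ x = a
            revert a
            decide
          exact ⟨f x, hfR x hx3, Or.inr (Or.inr ⟨hfB3 x hx3, h1⟩)⟩
    · exact ⟨x, hrefl x, Or.inl ⟨hx, hB⟩⟩
  -- conclude
  refine ⟨{x | L x ∨ D x}, ?_, ?_⟩
  · ext x
    simp only [low, Set.mem_setOf_eq, Set.mem_iInter]
    constructor
    · intro h i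
      intro y hxy
      rcases h y hxy with hL | hD
      · exact hL i y (hrefl y)
      · obtain ⟨z, hyz, hzL, hzD⟩ := hDwit y hD
        rcases h z (htrans hxy hyz) with h' | h'
        · exact absurd h' hzL
        · exact absurd h' hzD
    · intro h y hxy
      exact Or.inl (fun i z hyz => h i z (htrans hxy hyz))
  · ext x
    simp only [upp, Set.mem_setOf_eq, Set.mem_iInter]
    constructor
    · rintro ⟨y, hxy, hy⟩ i
      have hyH : H y := by
        rcases hy with hL | hD
        · exact hLH y hL
        · exact hDH y hD
      obtain ⟨z, hyz, hz⟩ := hyH i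
      exact ⟨z, htrans hxy hyz, hz⟩
    · intro h
      have hxH : H x := h
      by_cases hcl : ∃ y, R x y ∧ L y
      · obtain ⟨y, hxy, hyL⟩ := hcl
        exact ⟨y, hxy, Or.inl hyL⟩
      · have hxE : E x := ⟨hxH, fun y hxy hyL => hcl ⟨y, hxy, hyL⟩⟩
        obtain ⟨z, hxz, hzD⟩ := hcov x hxE
        exact ⟨z, hxz, Or.inr hzD⟩
end

section
/- Let R be a quasiorder on a nonempty set U. For any family {X_i : i ∈ I} of subsets of U, there exists a set V ⊆ U such that V^▼ = ⋃_{i∈I} X_i^▼ and V^▲ = ⋃_{i∈I} X_i^▲. Hence RS = {(X^▼, X^▲) : X ⊆ U} is a complete sublattice of ℘(U) × ℘(U), and in particular a completely distributive complete lattice. -/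
variable {U : Type*}

theorem graph_split {α : Type*} (f : α → α) (hf : ∀ x, f x ≠ x) :
    ∃ V : Set α, (∀ x, ∃ n, f^[n] x ∈ V) ∧ ∀ x ∈ V, f x ∉ V := by
  classical
  let r : α → α → Prop := fun x y => ∃ n m, f^[n] x = f^[m] y
  have hr_refl : ∀ x, r x x := fun x => ⟨0, 0, rfl⟩
  have hr_symm : ∀ {x y}, r x y → r y x := by
    rintro x y ⟨n, m, h⟩; exact ⟨m, n, h.symm⟩
  have hr_trans : ∀ {x y z}, r x y → r y z → r x z := by
    rintro x y z ⟨n, m, h1⟩ ⟨p, q, h2⟩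
    refine ⟨p + n, m + q, ?_⟩
    calc f^[p+n] x = f^[p] (f^[n] x) := Function.iterate_add_apply ..
    _ = f^[p] (f^[m] y) := by rw [h1]
    _ = f^[p+m] y := (Function.iterate_add_apply ..).symm
    _ = f^[m+p] y := by rw [Nat.add_comm]
    _ = f^[m] (f^[p] y) := Function.iterate_add_apply ..
    _ = f^[m] (f^[q] z) := by rw [h2]
    _ = f^[m+q] z := (Function.iterate_add_apply ..).symm
  let s : Setoid α := ⟨r, ⟨hr_refl, hr_symm, hr_trans⟩⟩
  let mk : α → Quotient s := fun x => Quotient.mk s x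
  have hmk : ∀ {x y}, r x y → mk x = mk y := fun h => Quotient.sound h
  have hmk' : ∀ {x y}, mk x = mk y → r x y := fun h => Quotient.exact h
  have hout : ∀ q : Quotient s, mk q.out = q := fun q => Quotient.out_eq q
  let per : α → Prop := fun p => ∃ k, 0 < k ∧ f^[k] p = p
  let hP : α → Prop := fun x => ∃ p, per p ∧ r x p
  have hP_inv : ∀ {x y}, r x y → hP y → hP x := by
    rintro x y hxy ⟨p, hp, hyp⟩; exact ⟨p, hp, hr_trans hxy hyp⟩
  let pick : Quotient s → α := fun q => if h : ∃ p, per p ∧ mk p = q then h.choose else q.out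
  have hpick : ∀ q, (∃ p, per p ∧ mk p = q) → per (pick q) ∧ mk (pick q) = q := by
    intro q h
    have : pick q = h.choose := dif_pos h
    rw [this]; exact h.choose_spec
  let V : Set α := {v | (hP v ∧ v = pick (mk v)) ∨ (¬ hP v ∧ ∃ n, v = f^[2*n] (mk v).out)}
  have per_mul : ∀ (p : α) (k : ℕ), f^[k] p = p → ∀ j, f^[j*k] p = p := by
    intro p k hk j
    induction j with
    | zero => simp
    | succ j ih => rw [Nat.succ_mul, Function.iterate_add_apply, hk, ih]
  have reach : ∀ x p, per p → r x p → ∃ n, f^[n] x = p := by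
    rintro x p ⟨k, hk, hper⟩ ⟨n, m, h⟩
    refine ⟨((m+1)*k - m) + n, ?_⟩
    have hle : m ≤ (m+1)*k := by
      have : (m+1) * 1 ≤ (m+1)*k := Nat.mul_le_mul_left _ hk
      omega
    rw [Function.iterate_add_apply, h, ← Function.iterate_add_apply, Nat.sub_add_cancel hle]
    exact per_mul p k hper (m+1)
  have mkper : ∀ (w : α) (a b : ℕ), a < b → f^[a] w = f^[b] w → hP w := by
    intro w a b hab h
    refine ⟨f^[a] w, ⟨b - a, by omega, ?_⟩, ⟨a, 0, by simp⟩⟩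
    rw [← Function.iterate_add_apply, Nat.sub_add_cancel (le_of_lt hab), ← h]
  refine ⟨V, ?_, ?_⟩
  · intro x
    by_cases hx : hP x
    · obtain ⟨p, hp, hxp⟩ := hx
      have hcond : ∃ p', per p' ∧ mk p' = mk x := ⟨p, hp, hmk (hr_symm hxp)⟩
      obtain ⟨hper0, hmk0⟩ := hpick (mk x) hcond
      have hrx : r x (pick (mk x)) := hr_symm (hmk' hmk0)
      obtain ⟨n, hn⟩ := reach x (pick (mk x)) hper0 hrx
      refine ⟨n, Or.inl ⟨?_, ?_⟩⟩
      · rw [hn]; exact ⟨pick (mk x), hper0, hr_refl _⟩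
      · rw [hn, hmk0]
    · have hxo : r x ((mk x).out) := hr_symm (hmk' (hout (mk x)))
      obtain ⟨n, m, hnm⟩ := hxo
      refine ⟨m % 2 + n, ?_⟩
      have hval : f^[m % 2 + n] x = f^[m % 2 + m] ((mk x).out) := by
        rw [Function.iterate_add_apply, hnm, ← Function.iterate_add_apply]
      have hrvx : r (f^[m % 2 + n] x) x := ⟨0, m % 2 + n, by simp⟩
      have hnP : ¬ hP (f^[m % 2 + n] x) := fun h => hx (hP_inv (hr_symm hrvx) h)
      refine Or.inr ⟨hnP, ?_⟩
      obtain ⟨j, hj⟩ : ∃ j, m % 2 + m = 2*j := ⟨m / 2 + m % 2, by omega⟩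
      refine ⟨j, ?_⟩
      rw [hmk hrvx, hval, hj]
  · intro v hv hfv
    have hrv : r (f v) v := ⟨0, 1, by simp⟩
    rcases hv with ⟨hPv, hveq⟩ | ⟨hnv, n, hvn⟩
    · rcases hfv with ⟨hPfv, hfveq⟩ | ⟨hn, _⟩
      · rw [hmk hrv, ← hveq] at hfveq
        exact hf v hfveq
      · exact hn (hP_inv hrv hPv)
    · rcases hfv with ⟨hPfv, _⟩ | ⟨hnfv, m, hfm⟩
      · exact hnv (hP_inv (hr_symm hrv) hPfv)
      · rw [hmk hrv] at hfm
        have h1 : f^[2*n+1] ((mk v).out) = f^[2*m] ((mk v).out) := by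
          calc f^[2*n+1] ((mk v).out) = f (f^[2*n] ((mk v).out)) :=
                Function.iterate_succ_apply' ..
          _ = f v := by rw [← hvn]
          _ = f^[2*m] ((mk v).out) := hfm
        have hout_hP : hP ((mk v).out) := by
          rcases Nat.lt_or_ge (2*n+1) (2*m) with h | h
          · exact mkper _ _ _ h h1
          · have hlt : 2*m < 2*n+1 := by omega
            exact mkper _ _ _ hlt h1.symm
        have hrvo : r v ((mk v).out) := ⟨0, 2*n, by simpa using hvn⟩
        exact hnv (hP_inv hrvo hout_hP)

theorem rough_sets_closed_under_union (R : U → U → Prop) [Nonempty U]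
    (hrefl : Reflexive R) (htrans : Transitive R)
    (I : Type*) (X : I → Set U) :
    ∃ V : Set U, low R V = ⋃ i, low R (X i) ∧ upp R V = ⋃ i, upp R (X i) := by
  classical
  set A : Set U := ⋃ i, low R (X i) with hA
  set CU : Set U := ⋃ i, X i with hCU
  let U' : Set U := {x | ∀ z, R x z → z ∉ A}
  let Cpp : Set U := {y | y ∈ U' ∧ ∀ z, R y z → z ∈ CU}
  let V₁ : Set U := {y | y ∈ U' ∧ y ∈ CU ∧ ∃ z, R y z ∧ z ∉ CU}
  have key : ∀ y : ↥Cpp, ∃ z : ↥Cpp, R y.1 z.1 ∧ z ≠ y := by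
    rintro ⟨y, hyU', hyC⟩
    have hyCU : y ∈ CU := hyC y (hrefl y)
    rw [hCU, Set.mem_iUnion] at hyCU
    obtain ⟨i, hyi⟩ := hyCU
    have hesc : ∃ z, R y z ∧ z ∉ X i := by
      by_contra h
      push_neg at h
      have hyA : y ∈ A := by
        rw [hA, Set.mem_iUnion]
        exact ⟨i, fun z hz => h z hz⟩
      exact hyU' y (hrefl y) hyA
    obtain ⟨z, hyz, hzi⟩ := hesc
    refine ⟨⟨z, fun w hw => hyU' w (htrans hyz hw), fun w hw => hyC w (htrans hyz hw)⟩,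
      hyz, ?_⟩
    intro hzy
    apply hzi
    have hz : z = y := congrArg Subtype.val hzy
    rw [hz]; exact hyi
  let esc : ↥Cpp → ↥Cpp := fun y => (key y).choose
  have hescR : ∀ y, R y.1 (esc y).1 := fun y => (key y).choose_spec.1
  have hescne : ∀ y, esc y ≠ y := fun y => (key y).choose_spec.2
  obtain ⟨VS, hVS1, hVS2⟩ := graph_split esc hescne
  have hescIt : ∀ (y : ↥Cpp) (n : ℕ), R y.1 ((esc^[n]) y).1 := by
    intro y n
    induction n with
    | zero => simpa using hrefl y.1
    | succ n ih =>
      rw [Function.iterate_succ_apply']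
      exact htrans ih (hescR _)
  let V2 : Set U := Subtype.val '' VS
  have hV2Cpp : ∀ x ∈ V2, x ∈ Cpp := by
    rintro x ⟨xh, _, rfl⟩; exact xh.2
  refine ⟨A ∪ V₁ ∪ V2, ?_, ?_⟩
  · ext x
    simp only [low, Set.mem_setOf_eq]
    constructor
    · intro hx
      by_contra hxA
      have hxV : x ∈ A ∪ V₁ ∪ V2 := hx x (hrefl x)
      rcases hxV with (hxA' | hxV₁) | hxV2
      · exact hxA hxA'
      · obtain ⟨hxU', hxCU, z, hxz, hzCU⟩ := hxV₁
        have hz := hx z hxz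
        rcases hz with (hzA | hzV₁) | hzV2
        · exact hxU' z hxz hzA
        · exact hzCU hzV₁.2.1
        · exact hzCU ((hV2Cpp z hzV2).2 z (hrefl z))
      · obtain ⟨xh, hxhVS, rfl⟩ := hxV2
        have hxz : R xh.1 (esc xh).1 := hescR xh
        have hz := hx (esc xh).1 hxz
        rcases hz with (hzA | hzV₁) | hzV2
        · exact (esc xh).2.1 (esc xh).1 (hrefl _) hzA
        · obtain ⟨_, _, w, hzw, hwCU⟩ := hzV₁
          exact hwCU ((esc xh).2.2 w hzw)
        · obtain ⟨wh, hwhVS, hwhval⟩ := hzV2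
          have : wh = esc xh := Subtype.ext hwhval
          rw [this] at hwhVS
          exact hVS2 xh hxhVS hwhVS
    · intro hx y hxy
      rw [hA, Set.mem_iUnion] at hx
      obtain ⟨i, hi⟩ := hx
      simp only [low, Set.mem_setOf_eq] at hi
      refine Or.inl (Or.inl ?_)
      rw [hA, Set.mem_iUnion]
      exact ⟨i, fun z hz => hi z (htrans hxy hz)⟩
  · ext x
    simp only [upp, Set.mem_setOf_eq, Set.mem_iUnion]
    constructor
    · rintro ⟨z, hxz, hzV⟩
      have hzCU : z ∈ CU := by
        rcases hzV with (hzA | hzV₁) | hzV2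
        · rw [hA, Set.mem_iUnion] at hzA
          obtain ⟨i, hi⟩ := hzA
          simp only [low, Set.mem_setOf_eq] at hi
          rw [hCU, Set.mem_iUnion]
          exact ⟨i, hi z (hrefl z)⟩
        · exact hzV₁.2.1
        · exact (hV2Cpp z hzV2).2 z (hrefl z)
      rw [hCU, Set.mem_iUnion] at hzCU
      obtain ⟨i, hzi⟩ := hzCU
      exact ⟨i, z, hxz, hzi⟩
    · rintro ⟨i, y, hxy, hyi⟩
      by_cases hcase : ∃ a, R x a ∧ a ∈ A
      · obtain ⟨a, hxa, haA⟩ := hcase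
        exact ⟨a, hxa, Or.inl (Or.inl haA)⟩
      · push_neg at hcase
        have hyU' : y ∈ U' := fun w hw => hcase w (htrans hxy hw)
        by_cases hyb : ∃ z, R y z ∧ z ∉ CU
        · obtain ⟨z, hz1, hz2⟩ := hyb
          refine ⟨y, hxy, Or.inl (Or.inr ⟨hyU', ?_, z, hz1, hz2⟩)⟩
          rw [hCU, Set.mem_iUnion]; exact ⟨i, hyi⟩
        · push_neg at hyb
          have hyCpp : y ∈ Cpp := ⟨hyU', hyb⟩
          obtain ⟨n, hn⟩ := hVS1 ⟨y, hyCpp⟩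
          exact ⟨(esc^[n] ⟨y, hyCpp⟩).1, htrans hxy (hescIt ⟨y, hyCpp⟩ n),
            Or.inr ⟨_, hn, rfl⟩⟩
end

section
/- Let R be a quasiorder on U. In the complete lattice RS of rough sets, the pseudocomplement of the rough set A(X) = (X^▼, X^▲) is A(((X^▲)^△)^c): that is, A(X) ∧ A(((X^▲)^△)^c) = (∅, ∅), and whenever A(X) ∧ A(Y) = (∅, ∅), we have A(Y) ≤ A(((X^▲)^△)^c). -/
variable {U : Type*}

theorem pseudocomplement (R : U → U → Prop)
    (hrefl : Reflexive R) (htrans : Transitive R) (X : Set U) :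
    (low R X ∩ low R (upp (fun a b => R b a) (upp R X))ᶜ = ∅ ∧
      upp R X ∩ upp R (upp (fun a b => R b a) (upp R X))ᶜ = ∅) ∧
    ∀ Y : Set U, (low R X ∩ low R Y = ∅ ∧ upp R X ∩ upp R Y = ∅) →
      low R Y ⊆ low R (upp (fun a b => R b a) (upp R X))ᶜ ∧
      upp R Y ⊆ upp R (upp (fun a b => R b a) (upp R X))ᶜ := by
  constructor
  · constructor
    · ext x
      simp only [Set.mem_inter_iff, Set.mem_empty_iff_false, iff_false, not_and]
      intro hx hz
      have hxX : x ∈ X := hx x (hrefl x)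
      have hxZ := hz x (hrefl x)
      exact hxZ ⟨x, hrefl x, x, hrefl x, hxX⟩
    · ext x
      simp only [Set.mem_inter_iff, Set.mem_empty_iff_false, iff_false, not_and]
      rintro ⟨y, hxy, hyX⟩ ⟨z, hxz, hz⟩
      exact hz ⟨x, hxz, y, hxy, hyX⟩
  · rintro Y ⟨-, hU⟩
    have hYZ : Y ⊆ (upp (fun a b => R b a) (upp R X))ᶜ := by
      intro y hy ⟨w, hwy, hwU⟩
      have : w ∈ upp R X ∩ upp R Y := ⟨hwU, y, hwy, hy⟩
      rw [hU] at this
      exact this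
    constructor
    · intro x hx y hxy
      exact hYZ (hx y hxy)
    · rintro x ⟨y, hxy, hy⟩
      exact ⟨y, hxy, hYZ hy⟩
end

section
/- Let R be a quasiorder on U. In the complete lattice RS of rough sets, the dual pseudocomplement of A(X) = (X^▼, X^▲) is A(((X^▼)^▽)^c): that is, A(X) ∨ A(((X^▼)^▽)^c) = (U, U), and whenever A(X) ∨ A(Y) = (U, U), we have A(((X^▼)^▽)^c) ≤ A(Y). -/
variable {U : Type*}

theorem dual_pseudocomplement (R : U → U → Prop)
    (hrefl : Reflexive R) (htrans : Transitive R) (X : Set U) :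
    (low R X ∪ low R (low (fun a b => R b a) (low R X))ᶜ = Set.univ ∧
      upp R X ∪ upp R (low (fun a b => R b a) (low R X))ᶜ = Set.univ) ∧
    ∀ Y : Set U, (low R X ∪ low R Y = Set.univ ∧ upp R X ∪ upp R Y = Set.univ) →
      low R (low (fun a b => R b a) (low R X))ᶜ ⊆ low R Y ∧
      upp R (low (fun a b => R b a) (low R X))ᶜ ⊆ upp R Y := by
  set Z : Set U := (low (fun a b => R b a) (low R X))ᶜ with hZ
  -- key: if x ∉ low R X then every R-successor of x is in Z
  have key : ∀ x, x ∉ low R X → ∀ y, R x y → y ∈ Z := by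
    intro x hx y hxy
    intro hy
    exact hx (hy x hxy)
  constructor
  · constructor
    · ext x
      simp only [Set.mem_union, Set.mem_univ, iff_true]
      by_cases hx : x ∈ low R X
      · exact Or.inl hx
      · exact Or.inr (fun y hxy => key x hx y hxy)
    · ext x
      simp only [Set.mem_union, Set.mem_univ, iff_true]
      by_cases hx : x ∈ low R X
      · exact Or.inl ⟨x, hrefl x, hx x (hrefl x)⟩
      · exact Or.inr ⟨x, hrefl x, key x hx x (hrefl x)⟩
  · intro Y ⟨hlow, _⟩
    -- Z ⊆ Y
    have hZY : Z ⊆ Y := by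
      intro y hy
      have hy' : ¬ ∀ z, R z y → z ∈ low R X := hy
      push_neg at hy'
      obtain ⟨z, hzy, hz⟩ := hy'
      have hzY : z ∈ low R Y := by
        have := Set.eq_univ_iff_forall.mp hlow z
        rcases this with h | h
        · exact absurd h hz
        · exact h
      exact hzY y hzy
    constructor
    · exact fun x hx y hxy => hZY (hx y hxy)
    · rintro x ⟨y, hxy, hy⟩
      exact ⟨y, hxy, hZY hy⟩
end

section
/- Let R be a quasiorder on U and X ⊆ U. The following are equivalent: (i) there exists Y ⊆ U with A(X) ∧ A(Y) = (∅,∅) and A(X) ∨ A(Y) = (U,U) (A(X) is complemented in RS); (ii) X^▼ = X = X^▲ (A(X) is exact); (iii) X is a union of equivalence classes of the smallest equivalence relation containing R. -/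
variable {U : Type*}

theorem complemented_iff_exact_iff_union_of_classes (R : U → U → Prop)
    (hrefl : Reflexive R) (htrans : Transitive R) (X : Set U) :
    ((∃ Y : Set U, (low R X ∩ low R Y = ∅ ∧ upp R X ∩ upp R Y = ∅) ∧
        (low R X ∪ low R Y = Set.univ ∧ upp R X ∪ upp R Y = Set.univ)) ↔
      (low R X = X ∧ upp R X = X)) ∧
    ((low R X = X ∧ upp R X = X) ↔
      ∃ H : Set (Set U), (∀ C ∈ H, ∃ a, C = {y | Relation.EqvGen R a y}) ∧
        X = ⋃₀ H) := by
  have hlow_sub : ∀ S : Set U, low R S ⊆ S := fun S x hx => hx x (hrefl x)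
  have hsub_upp : ∀ S : Set U, S ⊆ upp R S := fun S x hx => ⟨x, hrefl x, hx⟩
  constructor
  · constructor
    · rintro ⟨Y, ⟨hli, hui⟩, ⟨hlu, huu⟩⟩
      have hXY : ∀ x, x ∈ X → x ∈ Y → False := fun x hx hy =>
        Set.eq_empty_iff_forall_notMem.1 hui x ⟨hsub_upp X hx, hsub_upp Y hy⟩
      have hcover : ∀ x, x ∈ low R X ∨ x ∈ low R Y := fun x =>
        (Set.eq_univ_iff_forall.1 hlu x)
      constructor
      · apply Set.Subset.antisymm (hlow_sub X)
        intro x hx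
        rcases hcover x with h | h
        · exact h
        · exact absurd (hlow_sub Y h) (fun hy => hXY x hx hy)
      · apply Set.Subset.antisymm _ (hsub_upp X)
        intro x hx
        have hnY : x ∉ upp R Y := fun h => Set.eq_empty_iff_forall_notMem.1 hui x ⟨hx, h⟩
        rcases hcover x with h | h
        · exact hlow_sub X h
        · exact absurd (hsub_upp Y (hlow_sub Y h)) hnY
    · rintro ⟨hl, hu⟩
      have hfwd : ∀ x y, x ∈ X → R x y → y ∈ X := fun x y hx hxy => (hl ▸ hx) y hxy
      have hbwd : ∀ x y, y ∈ X → R x y → x ∈ X := fun x y hy hxy =>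
        hu ▸ (⟨y, hxy, hy⟩ : x ∈ upp R X)
      refine ⟨Xᶜ, ⟨?_, ?_⟩, ?_, ?_⟩
      · apply Set.eq_empty_iff_forall_notMem.2
        rintro x ⟨h1, h2⟩
        exact h2 x (hrefl x) (hlow_sub X h1)
      · apply Set.eq_empty_iff_forall_notMem.2
        rintro x ⟨⟨y, hxy, hy⟩, ⟨z, hxz, hz⟩⟩
        exact hz (hfwd x z (hbwd x y hy hxy) hxz)
      · apply Set.eq_univ_iff_forall.2
        intro x
        by_cases hx : x ∈ X
        · exact Or.inl (fun y hxy => hfwd x y hx hxy)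
        · exact Or.inr (fun y hxy hy => hx (hbwd x y hy hxy))
      · apply Set.eq_univ_iff_forall.2
        intro x
        by_cases hx : x ∈ X
        · exact Or.inl (hsub_upp X hx)
        · exact Or.inr (hsub_upp Xᶜ hx)
  · constructor
    · rintro ⟨hl, hu⟩
      have hfwd : ∀ x y, x ∈ X → R x y → y ∈ X := fun x y hx hxy => (hl ▸ hx) y hxy
      have hbwd : ∀ x y, y ∈ X → R x y → x ∈ X := fun x y hy hxy =>
        hu ▸ (⟨y, hxy, hy⟩ : x ∈ upp R X)
      have hcl : ∀ a y, Relation.EqvGen R a y → (a ∈ X ↔ y ∈ X) := by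
        intro a y h
        induction h with
        | rel x y hxy => exact ⟨fun hx => hfwd x y hx hxy, fun hy => hbwd x y hy hxy⟩
        | refl x => exact Iff.rfl
        | symm x y _ ih => exact ih.symm
        | trans x y z _ _ ih1 ih2 => exact ih1.trans ih2
      refine ⟨(fun a => {y | Relation.EqvGen R a y}) '' X, ?_, ?_⟩
      · rintro C ⟨a, _, rfl⟩
        exact ⟨a, rfl⟩
      · ext x
        constructor
        · intro hx
          exact ⟨{y | Relation.EqvGen R x y}, ⟨x, hx, rfl⟩, Relation.EqvGen.refl x⟩
        · rintro ⟨C, ⟨a, ha, rfl⟩, hx⟩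
          exact (hcl a x hx).1 ha
    · rintro ⟨H, hH, rfl⟩
      have hfwd : ∀ x y, x ∈ ⋃₀ H → R x y → y ∈ ⋃₀ H := by
        rintro x y ⟨C, hC, hx⟩ hxy
        obtain ⟨a, rfl⟩ := hH C hC
        exact ⟨_, hC, Relation.EqvGen.trans a x y hx (Relation.EqvGen.rel x y hxy)⟩
      have hbwd : ∀ x y, y ∈ ⋃₀ H → R x y → x ∈ ⋃₀ H := by
        rintro x y ⟨C, hC, hy⟩ hxy
        obtain ⟨a, rfl⟩ := hH C hC
        exact ⟨_, hC, Relation.EqvGen.trans a y x hy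
          (Relation.EqvGen.symm x y (Relation.EqvGen.rel x y hxy))⟩
      constructor
      · exact Set.Subset.antisymm (hlow_sub _) (fun x hx y hxy => hfwd x y hx hxy)
      · exact Set.Subset.antisymm (fun x ⟨y, hxy, hy⟩ => hbwd x y hy hxy) (hsub_upp _)
end

section
/- Let R be a quasiorder on U and x ∈ U with |R(x)| ≥ 2. Then the pair (∅, {x}^▲) is a rough set (equals A({x})) and it is completely join-irreducible in the complete lattice RS: if (∅, {x}^▲) = ⋁_{i∈I} A(X_i) then (∅, {x}^▲) = A(X_i) for some i. -/
variable {U : Type*}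

theorem singleton_join_irreducible (R : U → U → Prop)
    (hrefl : Reflexive R) (htrans : Transitive R) (x : U)
    (hx : ∃ y z, R x y ∧ R x z ∧ y ≠ z) :
    low R {x} = ∅ ∧
    ∀ (I : Type*) (X : I → Set U),
      ((∅ : Set U) = ⋃ i, low R (X i) ∧ upp R {x} = ⋃ i, upp R (X i)) →
      ∃ i, low R (X i) = ∅ ∧ upp R (X i) = upp R {x} := by
  obtain ⟨y, z, hxy, hxz, hyz⟩ := hx
  have hlow : low R {x} = ∅ := by
    ext w
    simp only [low, Set.mem_setOf_eq, Set.mem_empty_iff_false, iff_false]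
    intro h
    have hwx : w = x := (h w (hrefl w)).symm ▸ rfl
    have hy : y = x := h y (hwx ▸ hxy)
    have hz : z = x := h z (hwx ▸ hxz)
    exact hyz (hy.trans hz.symm)
  refine ⟨hlow, fun I X ⟨hL, hU⟩ => ?_⟩
  have hxmem : x ∈ upp R {x} := ⟨x, hrefl x, rfl⟩
  rw [hU] at hxmem
  obtain ⟨_, ⟨i, rfl⟩, y', hxy', hy'⟩ := hxmem
  refine ⟨i, ?_, ?_⟩
  · apply Set.eq_empty_of_subset_empty
    rw [hL]
    exact Set.subset_iUnion (fun j => low R (X j)) i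
  · apply Set.Subset.antisymm
    · rw [hU]
      exact Set.subset_iUnion (fun j => upp R (X j)) i
    · rintro w ⟨v, hwv, rfl⟩
      exact ⟨y', htrans hwv hxy', hy'⟩
end

section
/- Let R be a quasiorder on U. The complete lattice RS of rough sets determined by R is a Stone lattice (i.e., x* ∨ x** = 1 for all x, where * is the pseudocomplement) if and only if R⁻¹ ∘ R equals the smallest equivalence relation containing R. -/
variable {U : Type*}

private lemma mem_cl {R : U → U → Prop} {X : Set U} {x : U} :
    x ∈ upp (fun a b => R b a) (upp R X) ↔ ∃ w, (∃ z, R z x ∧ R z w) ∧ w ∈ X := by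
  constructor
  · rintro ⟨y, hyx, w, hyw, hw⟩
    exact ⟨w, ⟨y, hyx, hyw⟩, hw⟩
  · rintro ⟨w, ⟨z, hzx, hzw⟩, hw⟩
    exact ⟨z, hzx, w, hzw, hw⟩

theorem stone_iff (R : U → U → Prop) [Nonempty U]
    (hrefl : Reflexive R) (htrans : Transitive R) :
    (∀ X : Set U,
      low R (upp (fun a b => R b a) (upp R X))ᶜ ∪
        low R (upp (fun a b => R b a)
          (upp R (upp (fun a b => R b a) (upp R X))ᶜ))ᶜ = Set.univ ∧
      upp R (upp (fun a b => R b a) (upp R X))ᶜ ∪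
        upp R (upp (fun a b => R b a)
          (upp R (upp (fun a b => R b a) (upp R X))ᶜ))ᶜ = Set.univ) ↔
    (∀ x y, (∃ z, R z x ∧ R z y) ↔ Relation.EqvGen R x y) := by
  have Esymm : ∀ {x y : U}, (∃ z, R z x ∧ R z y) → (∃ z, R z y ∧ R z x) := by
    rintro x y ⟨z, h1, h2⟩; exact ⟨z, h2, h1⟩
  constructor
  · intro hstone x y
    -- first show E is transitive
    have Etrans : ∀ a b c : U, (∃ z, R z a ∧ R z b) → (∃ z, R z b ∧ R z c) →
        (∃ z, R z a ∧ R z c) := by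
      rintro a b c ⟨z, hza, hzb⟩ hbc
      have h := (hstone ({a} : Set U)).1
      have hz : z ∈ low R (upp (fun a' b' => R b' a') (upp R ({a} : Set U)))ᶜ ∪
          low R (upp (fun a' b' => R b' a')
            (upp R (upp (fun a' b' => R b' a') (upp R ({a} : Set U)))ᶜ))ᶜ := by
        rw [h]; trivial
      rcases hz with hz | hz
      · exfalso
        have ha := hz a hza
        exact ha (mem_cl.2 ⟨a, ⟨a, hrefl a, hrefl a⟩, rfl⟩)
      · have hb := hz b hzb
        by_contra hac
        apply hb
        apply mem_cl.2
        refine ⟨c, hbc, ?_⟩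
        intro hcC
        rcases mem_cl.1 hcC with ⟨w, hcw, hw⟩
        rcases hw with rfl
        exact hac (Esymm hcw)
    constructor
    · rintro ⟨z, h1, h2⟩
      exact Relation.EqvGen.trans _ _ _
        (Relation.EqvGen.symm _ _ (Relation.EqvGen.rel _ _ h1))
        (Relation.EqvGen.rel _ _ h2)
    · intro h
      induction h with
      | rel a b hab => exact ⟨a, hrefl a, hab⟩
      | refl a => exact ⟨a, hrefl a, hrefl a⟩
      | symm a b _ ih => exact Esymm ih
      | trans a b c _ _ ih1 ih2 => exact Etrans _ _ _ ih1 ih2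
  · intro heq X
    have Etrans : ∀ {a b c : U}, (∃ z, R z a ∧ R z b) → (∃ z, R z b ∧ R z c) →
        (∃ z, R z a ∧ R z c) := fun hab hbc =>
      (heq _ _).2 (Relation.EqvGen.trans _ _ _ ((heq _ _).1 hab) ((heq _ _).1 hbc))
    set C := upp (fun a b => R b a) (upp R X) with hC
    have hclY : upp (fun a b => R b a) (upp R Cᶜ) = Cᶜ := by
      ext x
      rw [mem_cl]
      constructor
      · rintro ⟨w, hxw, hw⟩ hxC
        apply hw
        rcases mem_cl.1 hxC with ⟨u, hxu, hu⟩
        exact mem_cl.2 ⟨u, Etrans (Esymm hxw) hxu, hu⟩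
      · intro hx
        exact ⟨x, ⟨x, hrefl x, hrefl x⟩, hx⟩
    rw [hclY]
    constructor
    · ext x
      simp only [Set.mem_union, Set.mem_univ, iff_true, compl_compl]
      by_cases hx : x ∈ C
      · right
        intro y hxy
        rcases mem_cl.1 hx with ⟨u, hxu, hu⟩
        exact mem_cl.2 ⟨u, Etrans ⟨x, hxy, hrefl x⟩ hxu, hu⟩
      · left
        intro y hxy hyC
        apply hx
        rcases mem_cl.1 hyC with ⟨u, hyu, hu⟩
        exact mem_cl.2 ⟨u, Etrans ⟨x, hrefl x, hxy⟩ hyu, hu⟩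
    · ext x
      simp only [Set.mem_union, Set.mem_univ, iff_true, compl_compl]
      by_cases hx : x ∈ C
      · right
        exact ⟨x, hrefl x, hx⟩
      · left
        exact ⟨x, hrefl x, hx⟩
end
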